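/- Let d ≥ 1 and let 1 < β_1 ≤ β_2 ≤ … ≤ β_d, and let T be the diagonal self-map of 𝕋^d acting coordinatewise as the β_i-transformations. Let {f_n}_{n≥1} be a sequence of maps 𝕋^d → 𝕋^d with a uniform Lipschitz constant and let ψ : ℕ → (0,∞). If liminf_{n→∞} (−log ψ(n))/n = ∞, then the set W(T,ψ,{f_n}) := {x ∈ 𝕋^d : |T_{β_i}^n(x_i) − f_n^{(i)}(x)| < ψ(n) for all 1 ≤ i ≤ d, for infinitely many n ∈ ℕ} has Hausdorff dimension 0. -/

import Mathlib

open Filter MeasureTheory Set Topology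
open scoped ENNReal NNReal

/-- The β-transformation `x ↦ βx - ⌊βx⌋` on `[0,1)`. -/
noncomputable def betaT (β : ℝ) : ℝ → ℝ := fun x => Int.fract (β * x)

/-- The usual metric on the torus `𝕋 = ℝ/ℤ`: distance from `a - b` to the nearest integer. -/
noncomputable def tdist (a b : ℝ) : ℝ := ⨅ k : ℤ, |a - b - (k : ℝ)|

/-- The metric on `𝕋^d` induced by the Euclidean metric, on representatives in `[0,1)^d`. -/
noncomputable def tdistVec {d : ℕ} (x y : Fin d → ℝ) : ℝ :=
  Real.sqrt (∑ i, (tdist (x i) (y i)) ^ 2)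

lemma round_min (t : ℝ) (k : ℤ) : |t - round t| ≤ |t - k| := by
  rcases eq_or_ne k (round t) with rfl | hk
  · exact le_rfl
  · have h1 : |t - round t| ≤ 1 / 2 := abs_sub_round t
    have h2 : (1 : ℝ) ≤ |(k : ℝ) - (round t : ℝ)| := by
      have : (1 : ℤ) ≤ |k - round t| := Int.one_le_abs (sub_ne_zero.mpr hk)
      calc (1:ℝ) = ((1:ℤ) : ℝ) := by norm_num
        _ ≤ (|k - round t| : ℤ) := by exact_mod_cast this
        _ = |(k : ℝ) - (round t : ℝ)| := by push_cast; ring_nf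
    have h3 : |(k : ℝ) - (round t : ℝ)| ≤ |t - round t| + |t - k| := by
      have := abs_sub (t - (round t : ℝ)) (t - (k : ℝ))
      calc |(k : ℝ) - (round t : ℝ)| = |(t - (round t:ℝ)) - (t - (k:ℝ))| := by ring_nf
        _ ≤ |t - (round t:ℝ)| + |t - (k:ℝ)| := abs_sub _ _
    linarith

lemma tdist_eq (a b : ℝ) : tdist a b = |a - b - round (a - b)| := by
  refine le_antisymm (ciInf_le ⟨0, ?_⟩ (round (a - b))) (le_ciInf fun k => round_min _ k)
  rintro y ⟨k, rfl⟩
  exact abs_nonneg _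

lemma tdist_nonneg' (a b : ℝ) : 0 ≤ tdist a b := by rw [tdist_eq]; exact abs_nonneg _

lemma tdist_le_abs (a b : ℝ) : tdist a b ≤ |a - b| := by
  rw [tdist_eq]
  simpa using round_min (a - b) 0

lemma betaT_mem (β x : ℝ) : betaT β x ∈ Set.Ico (0:ℝ) 1 :=
  ⟨Int.fract_nonneg _, Int.fract_lt_one _⟩

lemma betaT_iter_mem (β : ℝ) (n : ℕ) (x : ℝ) (hx : x ∈ Set.Ico (0:ℝ) 1) :
    (betaT β)^[n] x ∈ Set.Ico (0:ℝ) 1 := by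
  induction n with
  | zero => simpa using hx
  | succ n ih => rw [Function.iterate_succ_apply']; exact betaT_mem _ _

lemma betaT_iter_sub (β : ℝ) (x y : ℝ) (n : ℕ)
    (h : ∀ j < n, ⌊β * (betaT β)^[j] x⌋ = ⌊β * (betaT β)^[j] y⌋) :
    (betaT β)^[n] x - (betaT β)^[n] y = β ^ n * (x - y) := by
  induction n with
  | zero => simp
  | succ n ih =>
    have hd := h n (Nat.lt_succ_self n)
    have ih' := ih (fun j hj => h j (hj.trans (Nat.lt_succ_self n)))
    rw [Function.iterate_succ_apply', Function.iterate_succ_apply']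
    show Int.fract (β * (betaT β)^[n] x) - Int.fract (β * (betaT β)^[n] y) = _
    rw [Int.fract, Int.fract, hd]
    have : β * (betaT β)^[n] x - β * (betaT β)^[n] y = β ^ (n+1) * (x - y) := by
      rw [← mul_sub, ih']; ring
    linarith [this]

lemma tdistVec_le {d : ℕ} (x y : Fin d → ℝ) (m : ℝ) (hm : 0 ≤ m)
    (h : ∀ i, tdist (x i) (y i) ≤ m) : tdistVec x y ≤ Real.sqrt d * m := by
  have h1 : ∑ i, (tdist (x i) (y i))^2 ≤ (d : ℝ) * m ^ 2 := by
    calc ∑ i, (tdist (x i) (y i))^2 ≤ ∑ _i : Fin d, m ^ 2 := by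
          refine Finset.sum_le_sum fun i _ => ?_
          exact pow_le_pow_left₀ (tdist_nonneg' _ _) (h i) 2
      _ = (d : ℝ) * m ^ 2 := by simp [Finset.sum_const, mul_comm]
  calc tdistVec x y ≤ Real.sqrt ((d:ℝ) * m ^ 2) := Real.sqrt_le_sqrt h1
    _ = Real.sqrt d * m := by
        rw [Real.sqrt_mul (Nat.cast_nonneg d), Real.sqrt_sq hm]

lemma tdist_le_tdistVec {d : ℕ} (x y : Fin d → ℝ) (i : Fin d) :
    tdist (x i) (y i) ≤ tdistVec x y := by
  have : (tdist (x i) (y i))^2 ≤ ∑ j, (tdist (x j) (y j))^2 :=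
    Finset.single_le_sum (f := fun j => (tdist (x j) (y j))^2) (fun j _ => sq_nonneg _) (Finset.mem_univ i)
  calc tdist (x i) (y i) = Real.sqrt ((tdist (x i) (y i))^2) :=
        (Real.sqrt_sq (tdist_nonneg' _ _)).symm
    _ ≤ tdistVec x y := Real.sqrt_le_sqrt this

lemma key_diam {d : ℕ} (hd0 : 0 < d) (β : Fin d → ℝ) (hβ : ∀ i, 1 < β i)
    (hmono : Monotone β) (c : ℝ) (hc : 0 < c)
    (fn : (Fin d → ℝ) → (Fin d → ℝ))
    (ψn : ℝ) (hψn : 0 < ψn) (n : ℕ)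
    (hs1 : 2 * ψn + c * Real.sqrt d / (β ⟨0, hd0⟩) ^ n ≤ 1 / 2)
    (x x' : Fin d → ℝ) (hx : ∀ i, x i ∈ Set.Ico (0:ℝ) 1) (hx' : ∀ i, x' i ∈ Set.Ico (0:ℝ) 1)
    (hfn : tdistVec (fn x) (fn x') ≤ c * tdistVec x x')
    (hdig : ∀ i, ∀ j < n, ⌊β i * (betaT (β i))^[j] (x i)⌋ = ⌊β i * (betaT (β i))^[j] (x' i)⌋)
    (hhalf : ∀ i, ⌊2 * (betaT (β i))^[n] (x i)⌋ = ⌊2 * (betaT (β i))^[n] (x' i)⌋)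
    (hA : ∀ i, tdist ((betaT (β i))^[n] (x i)) (fn x i) < ψn)
    (hA' : ∀ i, tdist ((betaT (β i))^[n] (x' i)) (fn x' i) < ψn) :
    ∀ i, |x i - x' i| ≤ 4 * ψn := by
  set b := β ⟨0, hd0⟩ with hbdef
  have hb1 : 1 < b := hβ _
  set B := b ^ n with hBdef
  have hB1 : (1:ℝ) ≤ B := one_le_pow₀ hb1.le
  have hB0 : (0:ℝ) < B := lt_of_lt_of_le one_pos hB1
  have hble : ∀ i, B ≤ (β i) ^ n := by
    intro i
    exact pow_le_pow_left₀ (by linarith) (hmono (by simp [Fin.le_def])) n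
  have hβn0 : ∀ i, (0:ℝ) < (β i) ^ n := fun i => pow_pos (by linarith [hβ i]) n
  set D := tdistVec x x' with hDdef
  have hD0 : 0 ≤ D := Real.sqrt_nonneg _
  set a : Fin d → ℝ := fun i => (betaT (β i))^[n] (x i) with hadef
  set a' : Fin d → ℝ := fun i => (betaT (β i))^[n] (x' i) with ha'def
  have hE : ∀ i, a i - a' i = (β i) ^ n * (x i - x' i) :=
    fun i => betaT_iter_sub _ _ _ n (hdig i)
  have hhalf' : ∀ i, |a i - a' i| ≤ 1 / 2 := by
    intro i
    have h0 : ⌊2 * a i⌋ = ⌊2 * a' i⌋ := hhalf i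
    have h1 : ((⌊2 * a i⌋ : ℤ) : ℝ) = ((⌊2 * a' i⌋ : ℤ) : ℝ) := by exact_mod_cast h0
    have e1 := Int.floor_le (2 * a i)
    have e2 := Int.lt_floor_add_one (2 * a i)
    have e3 := Int.floor_le (2 * a' i)
    have e4 := Int.lt_floor_add_one (2 * a' i)
    rw [abs_le]; constructor <;> linarith
  have habs : ∀ i, (β i) ^ n * |x i - x' i| = |a i - a' i| := by
    intro i; rw [hE i, abs_mul, abs_of_pos (hβn0 i)]
  have hΔ : ∀ i, ∀ P : ℝ, |a i - a' i| ≤ P → |x i - x' i| ≤ P / B := by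
    intro i P hP
    rw [le_div_iff₀ hB0]
    calc |x i - x' i| * B ≤ |x i - x' i| * (β i)^n :=
          mul_le_mul_of_nonneg_left (hble i) (abs_nonneg _)
      _ = |a i - a' i| := by rw [← habs i]; ring
      _ ≤ P := hP
  have hΔB : ∀ i, |x i - x' i| ≤ 1 / B := fun i => hΔ i 1 (by linarith [hhalf' i])
  have hDle : D ≤ Real.sqrt d / B := by
    have := tdistVec_le x x' (1/B) (by positivity)
      (fun i => (tdist_le_abs _ _).trans (hΔB i))
    rwa [mul_one_div] at this
  have hcD : c * D ≤ c * Real.sqrt d / B := by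
    rw [mul_div_assoc]
    exact mul_le_mul_of_nonneg_left hDle hc.le
  have hP12 : 2 * ψn + c * D ≤ 1 / 2 := by linarith
  have key : ∀ i, |a i - a' i| < 2 * ψn + c * D := by
    intro i
    set u := a i - fn x i with hu
    set u' := a' i - fn x' i with hu'
    set g := fn x i - fn x' i with hg
    have h1 : |u - round u| < ψn := by have := hA i; rwa [tdist_eq] at this
    have h2 : |u' - round u'| < ψn := by have := hA' i; rwa [tdist_eq] at this
    have h3 : |g - round g| ≤ c * D := by
      have := (tdist_le_tdistVec (fn x) (fn x') i).trans hfn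
      rwa [tdist_eq] at this
    set K : ℤ := round u - round u' + round g with hK
    have hsum : |(a i - a' i) - (K : ℝ)| < 2 * ψn + c * D := by
      have e : (a i - a' i) - (K:ℝ) = (u - round u) - (u' - round u') + (g - round g) := by
        push_cast [hK]; ring
      rw [e]
      have t1 := abs_add_le ((u - round u) - (u' - round u')) (g - round g)
      have t2 := abs_sub (u - round u) (u' - round u')
      linarith
    have hK0 : K = 0 := by
      have habs1 : |(K:ℝ)| < 1 := by
        have t3 : |(K:ℝ)| ≤ |(a i - a' i) - (K:ℝ)| + |a i - a' i| := by
          have := abs_add_le ((K:ℝ) - (a i - a' i)) (a i - a' i)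
          have e2 : ((K:ℝ) - (a i - a' i)) + (a i - a' i) = (K:ℝ) := by ring
          rw [e2] at this
          rw [abs_sub_comm ((K:ℝ)) (a i - a' i)] at this
          linarith
        have := hhalf' i
        linarith
      have h7 : |K| < 1 := by exact_mod_cast habs1
      have h8 := abs_lt.mp h7
      omega
    rw [hK0] at hsum
    simpa using hsum
  have hP0 : (0:ℝ) ≤ 2 * ψn + c * D := by positivity
  have hloop : D ≤ Real.sqrt d * ((2 * ψn + c * D) / B) :=
    tdistVec_le x x' _ (div_nonneg hP0 hB0.le)
      (fun i => (tdist_le_abs _ _).trans (hΔ i _ (key i).le))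
  have hu12 : c * Real.sqrt d / B ≤ 1 / 2 := by linarith
  have hsd0 : (0:ℝ) ≤ Real.sqrt d := Real.sqrt_nonneg _
  have hDfin : D ≤ 4 * Real.sqrt d * ψn / B := by
    have e : Real.sqrt d * ((2 * ψn + c * D) / B)
        = 2 * Real.sqrt d * ψn / B + (c * Real.sqrt d / B) * D := by ring
    rw [e] at hloop
    have h9 : c * Real.sqrt d / B * D ≤ 1 / 2 * D := mul_le_mul_of_nonneg_right hu12 hD0
    have h10 : D ≤ 2 * (2 * Real.sqrt d * ψn / B) := by linarith
    calc D ≤ 2 * (2 * Real.sqrt d * ψn / B) := h10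
      _ = 4 * Real.sqrt d * ψn / B := by ring
  have hcD2 : c * D ≤ 2 * ψn := by
    have h4 : c * D ≤ c * (4 * Real.sqrt d * ψn / B) := mul_le_mul_of_nonneg_left hDfin hc.le
    have e : c * (4 * Real.sqrt d * ψn / B) = 4 * ψn * (c * Real.sqrt d / B) := by ring
    nlinarith
  intro i
  have h5 := hΔ i _ (key i).le
  have h6 : (2 * ψn + c * D) / B ≤ 4 * ψn := by
    rw [div_le_iff₀ hB0]
    nlinarith
  linarith

/-- **Degenerate case `τ = ∞`.** For `T = diag(β_1,…,β_d)` with `1 < β_1 ≤ ⋯ ≤ β_d`,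
a uniformly Lipschitz sequence of maps `f_n : 𝕋^d → 𝕋^d` and `ψ : ℕ → (0,∞)` with
`liminf (-log ψ(n))/n = ∞`, the set
`W(T,ψ,{f_n}) = {x ∈ 𝕋^d : |T_{β_i}^n(x_i) - f_n^{(i)}(x)| < ψ(n) (1 ≤ i ≤ d) for i.m. n}`
has Hausdorff dimension `0`. -/
theorem dimH_modified_shrinking_target_tau_infinite
    (d : ℕ) (hd : 1 ≤ d) (β : Fin d → ℝ) (hβ : ∀ i, 1 < β i) (hmono : Monotone β)
    (c : ℝ) (hc : 0 < c) (f : ℕ → (Fin d → ℝ) → (Fin d → ℝ))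
    (hf : ∀ n : ℕ, ∀ x y : Fin d → ℝ, (∀ i, x i ∈ Set.Ico (0 : ℝ) 1) →
      (∀ i, y i ∈ Set.Ico (0 : ℝ) 1) → tdistVec (f n x) (f n y) ≤ c * tdistVec x y)
    (ψ : ℕ → ℝ) (hψ : ∀ n, 0 < ψ n)
    (hτ : Filter.liminf (fun n : ℕ => ENNReal.ofReal (-Real.log (ψ n) / n)) atTop = ⊤) :
    dimH {x : Fin d → ℝ | (∀ i, x i ∈ Set.Ico (0 : ℝ) 1) ∧
        (∃ᶠ n in atTop, ∀ i, tdist ((betaT (β i))^[n] (x i)) (f n x i) < ψ n)} = 0 := by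
  have hd0 : 0 < d := hd
  set W := {x : Fin d → ℝ | (∀ i, x i ∈ Set.Ico (0 : ℝ) 1) ∧
      (∃ᶠ n in atTop, ∀ i, tdist ((betaT (β i))^[n] (x i)) (f n x i) < ψ n)} with hWdef
  -- main estimate: dimH W ≤ s for all 0 < s ≤ 1
  have main : ∀ s : ℝ≥0, 0 < s → s ≤ 1 → dimH W ≤ (s : ℝ≥0∞) := by
    intro s hs hs1
    set i0 : Fin d := ⟨0, hd0⟩ with hi0
    set itop : Fin d := ⟨d - 1, by omega⟩ with hitop
    set b := β i0 with hb
    have hb1 : 1 < b := hβ _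
    have hβtop : ∀ i, β i ≤ β itop := fun i => hmono (by simp [Fin.le_def, hitop]; omega)
    set K : ℕ := (⌊β itop⌋).toNat with hK
    have hK1 : 1 ≤ K := by
      have : (1 : ℤ) ≤ ⌊β itop⌋ := Int.le_floor.mpr (by push_cast; linarith [hβ itop])
      omega
    -- digit bounds
    have hdig_nonneg : ∀ (i : Fin d) (t : ℝ), t ∈ Set.Ico (0:ℝ) 1 → 0 ≤ ⌊β i * t⌋ := by
      intro i t ht
      exact Int.floor_nonneg.mpr (mul_nonneg (by linarith [hβ i]) ht.1)
    have hdig_le : ∀ (i : Fin d) (t : ℝ), t ∈ Set.Ico (0:ℝ) 1 → (⌊β i * t⌋).toNat ≤ K := by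
      intro i t ht
      have h1 : β i * t ≤ β itop := by
        have : β i * t ≤ β i * 1 := by
          apply mul_le_mul_of_nonneg_left (le_of_lt ht.2) (by linarith [hβ i])
        calc β i * t ≤ β i * 1 := this
          _ = β i := mul_one _
          _ ≤ β itop := hβtop i
      have := Int.floor_le_floor h1
      rw [hK]
      exact Int.toNat_le_toNat this
    have hhalf_bound : ∀ (t : ℝ), t ∈ Set.Ico (0:ℝ) 1 → 0 ≤ ⌊2 * t⌋ ∧ ⌊2 * t⌋ ≤ 1 := by
      intro t ht
      constructor
      · exact Int.floor_nonneg.mpr (by linarith [ht.1])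
      · have : (2:ℝ) * t < ((2:ℤ) : ℝ) := by push_cast; linarith [ht.2]
        have := Int.floor_lt.mpr this
        omega
    -- choice of M
    have hs0R : (0:ℝ) < (s:ℝ) := hs
    set M : ℝ := ((d : ℝ) * Real.log ((K:ℝ) + 1) + Real.log 2) / (s : ℝ) with hM
    have hlogK : (0:ℝ) ≤ Real.log ((K:ℝ) + 1) := Real.log_nonneg (by push_cast; linarith)
    have hM0 : 0 < M := by
      apply div_pos _ hs0R
      have := Real.log_pos (show (1:ℝ) < 2 by norm_num)
      have : (0:ℝ) ≤ (d:ℝ) * Real.log ((K:ℝ)+1) := by positivity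
      nlinarith [Real.log_pos (show (1:ℝ) < 2 by norm_num)]
    have hKpos : (0:ℝ) < (K:ℝ) + 1 := by positivity
    have hMs : ((K:ℝ)+1)^d * Real.exp (-(M * s)) ≤ 1/2 := by
      have hMseq : M * s = (d:ℝ) * Real.log ((K:ℝ)+1) + Real.log 2 :=
        div_mul_cancel₀ _ (ne_of_gt hs0R)
      have e1 : Real.exp ((d:ℝ) * Real.log ((K:ℝ)+1)) = ((K:ℝ)+1)^d := by
        rw [Real.exp_nat_mul, Real.exp_log hKpos]
      rw [hMseq, neg_add, Real.exp_add, Real.exp_neg, Real.exp_neg, e1,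
        Real.exp_log (show (0:ℝ) < 2 by norm_num)]
      have hKd : (0:ℝ) < ((K:ℝ)+1)^d := by positivity
      rw [div_eq_mul_inv]
      field_simp
      exact le_rfl
    -- eventual bound on ψ
    have hψev : ∀ᶠ n in atTop, ψ n ≤ Real.exp (-(M * n)) := by
      have hlt : ENNReal.ofReal M <
          liminf (fun n : ℕ => ENNReal.ofReal (-Real.log (ψ n) / n)) atTop := by
        rw [hτ]; exact ENNReal.ofReal_lt_top
      have hev := Filter.eventually_lt_of_lt_liminf hlt
      filter_upwards [hev, Filter.eventually_ge_atTop 1] with n h1 h2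
      have hn0 : (0:ℝ) < (n:ℝ) := by exact_mod_cast h2
      have h3 : M < -Real.log (ψ n) / n :=
        (ENNReal.ofReal_lt_ofReal_iff_of_nonneg hM0.le).mp h1
      have h4 : M * n < -Real.log (ψ n) := by rw [lt_div_iff₀ hn0] at h3; linarith
      have h5 : Real.log (ψ n) < -(M * n) := by linarith
      have h6 : Real.exp (Real.log (ψ n)) < Real.exp (-(M * n)) := Real.exp_lt_exp.mpr h5
      rw [Real.exp_log (hψ n)] at h6
      exact h6.le
    have hsd0 : (0:ℝ) ≤ Real.sqrt d := Real.sqrt_nonneg _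
    have htend1 : Tendsto (fun n : ℕ => Real.exp (-(M * n))) atTop (𝓝 0) := by
      apply Real.tendsto_exp_atBot.comp
      apply Filter.tendsto_neg_atTop_atBot.comp
      exact Tendsto.const_mul_atTop hM0 tendsto_natCast_atTop_atTop
    have htend2 : Tendsto (fun n : ℕ => c * Real.sqrt d / b ^ n) atTop (𝓝 0) := by
      apply Tendsto.div_atTop tendsto_const_nhds
      exact tendsto_pow_atTop_atTop_of_one_lt hb1
    have hsmallev : ∀ᶠ n in atTop, 2 * ψ n + c * Real.sqrt d / b ^ n ≤ 1/2 := by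
      filter_upwards [hψev, htend1.eventually_lt_const (show (0:ℝ) < 1/8 by norm_num),
        htend2.eventually_lt_const (show (0:ℝ) < 1/8 by norm_num)] with n h1 h2 h3
      linarith [hψ n]
    obtain ⟨N₀, hN₀⟩ := Filter.eventually_atTop.mp (hψev.and hsmallev)
    -- signature maps
    set sig : (m : ℕ) → (Fin d → ℝ) → ((Fin d → Fin m → Fin (K+1)) × (Fin d → Fin 2)) :=
      fun m x =>
        (fun i j => ⟨min (⌊β i * (betaT (β i))^[(j:ℕ)] (x i)⌋).toNat K,
            Nat.lt_succ_of_le (min_le_right _ _)⟩,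
         fun i => ⟨min (⌊2 * (betaT (β i))^[m] (x i)⌋).toNat 1,
            Nat.lt_succ_of_le (min_le_right _ _)⟩) with hsigdef
    set E : (m : ℕ) → ((Fin d → Fin m → Fin (K+1)) × (Fin d → Fin 2)) → Set (Fin d → ℝ) :=
      fun m σ => {x | (∀ i, x i ∈ Set.Ico (0:ℝ) 1) ∧
           (∀ i, tdist ((betaT (β i))^[m] (x i)) (f m x i) < ψ m) ∧ sig m x = σ} with hEdef
    -- signature recovery
    have hrec : ∀ m (x x' : Fin d → ℝ), (∀ i, x i ∈ Set.Ico (0:ℝ) 1) →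
        (∀ i, x' i ∈ Set.Ico (0:ℝ) 1) → sig m x = sig m x' →
        (∀ i, ∀ j < m, ⌊β i * (betaT (β i))^[j] (x i)⌋ = ⌊β i * (betaT (β i))^[j] (x' i)⌋) ∧
        (∀ i, ⌊2 * (betaT (β i))^[m] (x i)⌋ = ⌊2 * (betaT (β i))^[m] (x' i)⌋) := by
      intro m x x' hx hx' hsig
      have h1 := congrArg Prod.fst hsig
      have h2 := congrArg Prod.snd hsig
      simp only [hsigdef] at h1 h2
      constructor
      · intro i j hj
        have h3 := congrArg Fin.val (congrFun (congrFun h1 i) ⟨j, hj⟩)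
        simp only at h3
        have bx := betaT_iter_mem (β i) j (x i) (hx i)
        have bx' := betaT_iter_mem (β i) j (x' i) (hx' i)
        have n1 := hdig_nonneg i _ bx
        have n2 := hdig_le i _ bx
        have n3 := hdig_nonneg i _ bx'
        have n4 := hdig_le i _ bx'
        rw [min_eq_left n2, min_eq_left n4] at h3
        omega
      · intro i
        have h3 := congrArg Fin.val (congrFun h2 i)
        simp only at h3
        have bx := betaT_iter_mem (β i) m (x i) (hx i)
        have bx' := betaT_iter_mem (β i) m (x' i) (hx' i)
        obtain ⟨n1, n2⟩ := hhalf_bound _ bx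
        obtain ⟨n3, n4⟩ := hhalf_bound _ bx'
        have n2' : (⌊2 * (betaT (β i))^[m] (x i)⌋).toNat ≤ 1 := by omega
        have n4' : (⌊2 * (betaT (β i))^[m] (x' i)⌋).toNat ≤ 1 := by omega
        rw [min_eq_left n2', min_eq_left n4'] at h3
        omega
    -- diameter bound for classes
    have hdiam : ∀ m, N₀ ≤ m → ∀ σ, EMetric.diam (E m σ) ≤ ENNReal.ofReal (4 * ψ m) := by
      intro m hm σ
      apply EMetric.diam_le
      intro x hxE y hyE
      obtain ⟨hx, hxA, hxs⟩ := hxE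
      obtain ⟨hy, hyA, hys⟩ := hyE
      have hrec' := hrec m x y hx hy (hxs.trans hys.symm)
      have hkey := key_diam hd0 β hβ hmono c hc (f m) (ψ m) (hψ m) m
        (by simpa [hb, hi0] using (hN₀ m hm).2)
        x y hx hy (hf m x y hx hy) hrec'.1 hrec'.2 hxA hyA
      rw [edist_dist]
      apply ENNReal.ofReal_le_ofReal
      rw [dist_pi_le_iff (by linarith [hψ m])]
      intro i
      rw [Real.dist_eq]
      exact hkey i
    -- the covering radii
    set r : ℕ → ℝ≥0∞ := fun n => ENNReal.ofReal (4 * Real.exp (-(M * n))) with hrdef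
    have hrt : Tendsto r atTop (𝓝 0) := by
      have h0 := ENNReal.tendsto_ofReal (htend1.const_mul (4:ℝ))
      show Tendsto (fun n : ℕ => ENNReal.ofReal (4 * Real.exp (-(M * n)))) atTop (𝓝 0)
      simpa using h0
    have hcover := MeasureTheory.Measure.hausdorffMeasure_le_liminf_tsum ((s:ℝ≥0) : ℝ) W r hrt
      (fun n (p : Σ _k : ℕ, (Fin d → Fin (n + _k) → Fin (K+1)) × (Fin d → Fin 2)) =>
        E (n + p.1) p.2) ?ht ?hst
    case ht =>
      filter_upwards [Filter.eventually_ge_atTop N₀] with n hn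
      rintro ⟨k, σ⟩
      refine (hdiam (n + k) (by omega) σ).trans ?_
      apply ENNReal.ofReal_le_ofReal
      have h1 := (hN₀ (n + k) (by omega)).1
      have h2 : Real.exp (-(M * (↑(n + k) : ℝ))) ≤ Real.exp (-(M * n)) := by
        apply Real.exp_le_exp.mpr
        have : (n:ℝ) ≤ ((n + k : ℕ) : ℝ) := by push_cast; linarith [Nat.cast_nonneg (α := ℝ) k]
        nlinarith [hM0.le]
      linarith
    case hst =>
      apply Filter.Eventually.of_forall
      intro n x hxW
      obtain ⟨hx1, hx2⟩ := hxW
      obtain ⟨m, hmn, hP⟩ := (Filter.frequently_atTop.mp hx2) n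
      obtain ⟨k, rfl⟩ : ∃ k, m = n + k := ⟨m - n, by omega⟩
      exact Set.mem_iUnion.mpr ⟨⟨k, sig (n + k) x⟩, ⟨hx1, hP, rfl⟩⟩
    -- per-level sum bound
    have hterm : ∀ m, N₀ ≤ m →
        (∑' σ : (Fin d → Fin m → Fin (K+1)) × (Fin d → Fin 2),
            EMetric.diam (E m σ) ^ ((s:ℝ≥0):ℝ))
          ≤ ENNReal.ofReal (2^(d+2)) * (ENNReal.ofReal (1/2))^m := by
      intro m hm
      have hψm := (hN₀ m hm).1
      have hc4 : (0:ℝ) < 4 * Real.exp (-(M*m)) := by positivity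
      have hd1 : ∀ σ : (Fin d → Fin m → Fin (K+1)) × (Fin d → Fin 2),
          EMetric.diam (E m σ) ^ ((s:ℝ≥0):ℝ)
            ≤ ENNReal.ofReal (4 * Real.exp (-(M*m))) ^ ((s:ℝ≥0):ℝ) := by
        intro σ
        apply ENNReal.rpow_le_rpow _ (by positivity)
        exact (hdiam m hm σ).trans (ENNReal.ofReal_le_ofReal (by linarith))
      calc (∑' σ : (Fin d → Fin m → Fin (K+1)) × (Fin d → Fin 2),
              EMetric.diam (E m σ) ^ ((s:ℝ≥0):ℝ))
          ≤ ∑' _σ : (Fin d → Fin m → Fin (K+1)) × (Fin d → Fin 2),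
              ENNReal.ofReal (4 * Real.exp (-(M*m))) ^ ((s:ℝ≥0):ℝ) :=
            ENNReal.tsum_le_tsum hd1
        _ = (Fintype.card ((Fin d → Fin m → Fin (K+1)) × (Fin d → Fin 2)) : ℝ≥0∞)
              * ENNReal.ofReal (4 * Real.exp (-(M*m))) ^ ((s:ℝ≥0):ℝ) := by
            rw [tsum_fintype]
            simp [Finset.sum_const, nsmul_eq_mul]
        _ ≤ ENNReal.ofReal (2^(d+2)) * (ENNReal.ofReal (1/2))^m := by
            rw [ENNReal.ofReal_rpow_of_pos hc4,
              ← ENNReal.ofReal_natCast (Fintype.card _),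
              ← ENNReal.ofReal_mul (by positivity),
              ← ENNReal.ofReal_pow (by norm_num),
              ← ENNReal.ofReal_mul (by positivity)]
            apply ENNReal.ofReal_le_ofReal
            have hcard : ((Fintype.card ((Fin d → Fin m → Fin (K+1)) × (Fin d → Fin 2)) : ℕ) : ℝ)
                = (((K:ℝ)+1)^d)^m * 2^d := by
              simp only [Fintype.card_prod, Fintype.card_fun, Fintype.card_fin]
              push_cast
              rw [← pow_mul, ← pow_mul, mul_comm d m]
            rw [hcard]
            have e1 : (4 * Real.exp (-(M*m))) ^ ((s:ℝ≥0):ℝ)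
                = (4:ℝ)^((s:ℝ≥0):ℝ) * (Real.exp (-(M*(m:ℝ))))^((s:ℝ≥0):ℝ) :=
              Real.mul_rpow (by norm_num) (Real.exp_pos _).le
            have e2 : (Real.exp (-(M*(m:ℝ))))^((s:ℝ≥0):ℝ) = (Real.exp (-(M*(s:ℝ))))^m := by
              rw [← Real.exp_nat_mul, Real.rpow_def_of_pos (Real.exp_pos _), Real.log_exp]
              congr 1
              ring
            have e3 : (4:ℝ)^((s:ℝ≥0):ℝ) ≤ 4 := by
              calc (4:ℝ)^((s:ℝ≥0):ℝ) ≤ (4:ℝ)^(1:ℝ) :=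
                    Real.rpow_le_rpow_of_exponent_le (by norm_num) (by exact_mod_cast hs1)
                _ = 4 := Real.rpow_one _
            have e5 : (((K:ℝ)+1)^d * Real.exp (-(M*(s:ℝ))))^m ≤ (1/2:ℝ)^m :=
              pow_le_pow_left₀ (by positivity) hMs m
            have hexp0 : (0:ℝ) ≤ (Real.exp (-(M*(s:ℝ))))^m := by positivity
            have hKd0 : (0:ℝ) ≤ (((K:ℝ)+1)^d)^m := by positivity
            calc (((K:ℝ)+1)^d)^m * 2^d * (4 * Real.exp (-(M*(m:ℝ))))^((s:ℝ≥0):ℝ)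
                = (2:ℝ)^d * (4:ℝ)^((s:ℝ≥0):ℝ) * ((((K:ℝ)+1)^d)^m * (Real.exp (-(M*(s:ℝ))))^m) := by
                  rw [e1, e2]; ring
              _ = (2:ℝ)^d * (4:ℝ)^((s:ℝ≥0):ℝ) * ((((K:ℝ)+1)^d * Real.exp (-(M*(s:ℝ))))^m) := by
                  rw [mul_pow]
              _ ≤ (2:ℝ)^d * 4 * ((1/2:ℝ)^m) := by
                  have h6 : (0:ℝ) ≤ ((((K:ℝ)+1)^d * Real.exp (-(M*(s:ℝ))))^m) := by positivity
                  have h7 : (0:ℝ) < (2:ℝ)^d := by positivity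
                  have h9 : (4:ℝ)^((s:ℝ≥0):ℝ) * ((((K:ℝ)+1)^d * Real.exp (-(M*(s:ℝ))))^m)
                      ≤ 4 * ((((K:ℝ)+1)^d * Real.exp (-(M*(s:ℝ))))^m) :=
                    mul_le_mul_of_nonneg_right e3 h6
                  have h10 : (4:ℝ) * ((((K:ℝ)+1)^d * Real.exp (-(M*(s:ℝ))))^m)
                      ≤ 4 * ((1/2:ℝ)^m) :=
                    mul_le_mul_of_nonneg_left e5 (by norm_num)
                  calc (2:ℝ)^d * (4:ℝ)^((s:ℝ≥0):ℝ) * ((((K:ℝ)+1)^d * Real.exp (-(M*(s:ℝ))))^m)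
                      = (2:ℝ)^d * ((4:ℝ)^((s:ℝ≥0):ℝ) * ((((K:ℝ)+1)^d * Real.exp (-(M*(s:ℝ))))^m)) := by
                        ring
                    _ ≤ (2:ℝ)^d * (4 * ((1/2:ℝ)^m)) :=
                        mul_le_mul_of_nonneg_left (h9.trans h10) h7.le
                    _ = (2:ℝ)^d * 4 * ((1/2:ℝ)^m) := by ring
              _ = (2:ℝ)^(d+2) * (1/2:ℝ)^m := by ring
    -- assemble the tail sums
    set C : ℝ≥0∞ := ENNReal.ofReal (2^(d+2)) with hC
    have hhalfE : ENNReal.ofReal (1/2) = 2⁻¹ := by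
      rw [one_div, ENNReal.ofReal_inv_of_pos (by norm_num : (0:ℝ) < 2)]
      norm_num
    have hSn : ∀ᶠ n in atTop,
        (∑' p : Σ _k : ℕ, (Fin d → Fin (n + _k) → Fin (K+1)) × (Fin d → Fin 2),
            EMetric.diam (E (n + p.1) p.2) ^ ((s:ℝ≥0):ℝ)) ≤ C * 2 * 2⁻¹^n := by
      filter_upwards [Filter.eventually_ge_atTop N₀] with n hn
      calc (∑' p : Σ _k : ℕ, (Fin d → Fin (n + _k) → Fin (K+1)) × (Fin d → Fin 2),
              EMetric.diam (E (n + p.1) p.2) ^ ((s:ℝ≥0):ℝ))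
          = ∑' k : ℕ, ∑' σ : (Fin d → Fin (n + k) → Fin (K+1)) × (Fin d → Fin 2),
              EMetric.diam (E (n + k) σ) ^ ((s:ℝ≥0):ℝ) := ENNReal.tsum_sigma' _
        _ ≤ ∑' k : ℕ, C * 2⁻¹^n * 2⁻¹^k := by
            apply ENNReal.tsum_le_tsum
            intro k
            refine (hterm (n + k) (by omega)).trans_eq ?_
            rw [hhalfE, pow_add]
            ring
        _ = C * 2⁻¹^n * ∑' k : ℕ, (2⁻¹:ℝ≥0∞)^k := ENNReal.tsum_mul_left
        _ = C * 2⁻¹^n * 2 := by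
            rw [ENNReal.tsum_geometric]
            norm_num
        _ = C * 2 * 2⁻¹^n := by ring
    have htendS : Tendsto (fun n : ℕ => C * 2 * 2⁻¹^n) atTop (𝓝 0) := by
      have h2 : Tendsto (fun n : ℕ => (2⁻¹:ℝ≥0∞)^n) atTop (𝓝 0) :=
        ENNReal.tendsto_pow_atTop_nhds_zero_of_lt_one (by norm_num)
      have h3 := ENNReal.Tendsto.const_mul (a := C * 2) h2
        (Or.inr (by
          apply ENNReal.mul_ne_top ENNReal.ofReal_ne_top
          norm_num))
      simpa using h3
    have hμ0 : μH[((s:ℝ≥0):ℝ)] W = 0 := by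
      apply le_antisymm _ (zero_le)
      refine hcover.trans ?_
      have h4 := Filter.liminf_le_liminf hSn
      rw [htendS.liminf_eq] at h4
      exact h4
    exact dimH_le_of_hausdorffMeasure_ne_top (by rw [hμ0]; exact ENNReal.zero_ne_top)
  -- conclude dimH = 0
  refine le_antisymm ?_ (zero_le)
  refine ENNReal.le_of_forall_pos_le_add fun ε hε _ => ?_
  have h1 : dimH W ≤ (min ε 1 : ℝ≥0) :=
    main (min ε 1) (lt_min hε one_pos) (min_le_right _ _)
  have h2 : ((min ε 1 : ℝ≥0) : ℝ≥0∞) ≤ 0 + (ε : ℝ≥0∞) := by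
    rw [zero_add]
    exact_mod_cast min_le_left ε 1
  exact h1.trans h2
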